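/- Let $\mathcal{G}$ be an ultragraph with no sinks satisfying Condition (RFUM). Then each $A\in\mathcal{G}^0$ can be written uniquely as $A=\bigcup_{n=1}^k A_n$ where there is a unique index $k$ such that $|A_k|<\infty$ and $|\varepsilon(A_k)|<\infty$, each $A_j$ for $j\neq k$ is a minimal infinite emitter, and $A_j\cap A_k=\emptyset$ for all $j\neq k$. -/

import Mathlib

/-- An ultragraph: countable sets of vertices and edges, a source map `s : E → V` and a
range map `r : E → P(V) \ {∅}`. -/
structure Ultragraph (V E : Type*) where
  s : E → V
  r : E → Set V
  r_nonempty : ∀ e, (r e).Nonempty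

namespace Ultragraph

variable {V E : Type*}

/-- `G.G0` is the smallest collection of subsets of `V` containing all singletons and all
ranges `r e`, closed under finite unions (including the empty union) and nonempty finite
intersections. -/
inductive G0 (G : Ultragraph V E) : Set V → Prop
  | empty : G0 G ∅
  | vertex (v : V) : G0 G {v}
  | range (e : E) : G0 G (G.r e)
  | union {A B : Set V} : G0 G A → G0 G B → G0 G (A ∪ B)
  | inter {A B : Set V} : G0 G A → G0 G B → (A ∩ B).Nonempty → G0 G (A ∩ B)

variable (G : Ultragraph V E)

/-- `ε(A)`, the set of edges emitted by `A`. -/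
def eps (A : Set V) : Set E := {e | G.s e ∈ A}

/-- `A` is an infinite emitter if `ε(A)` is infinite. -/
def IsInfiniteEmitter (A : Set V) : Prop := (G.eps A).Infinite

/-- `A ∈ G⁰` is a minimal infinite emitter if it is an infinite emitter containing no proper
subset in `G⁰` that is an infinite emitter. -/
def IsMinimalInfiniteEmitter (A : Set V) : Prop :=
  G.G0 A ∧ G.IsInfiniteEmitter A ∧
    ∀ B : Set V, G.G0 B → B ⊆ A → G.IsInfiniteEmitter B → B = A

/-- `G` has no sinks: every vertex emits at least one edge. -/
def NoSinks : Prop := ∀ v : V, ∃ e : E, G.s e = v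

/-- Condition (RFUM): the range of each edge is a finite union of sets, each of which is a
minimal infinite emitter or a single vertex. -/
def RFUM : Prop := ∀ e : E, ∃ (n : ℕ) (A : Fin n → Set V),
  G.r e = ⋃ i, A i ∧ ∀ i, G.IsMinimalInfiniteEmitter (A i) ∨ ∃ v, A i = {v}

end Ultragraph

namespace Ultragraph

variable {V E : Type*} (G : Ultragraph V E)

lemma eps_mono {A B : Set V} (h : A ⊆ B) : G.eps A ⊆ G.eps B :=
  fun _ he => h he

lemma eps_sUnion (T : Set (Set V)) : G.eps (⋃₀ T) = ⋃ B ∈ T, G.eps B := by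
  ext e; simp [eps]

lemma finite_of_eps_finite (hns : G.NoSinks) {D : Set V} (h : (G.eps D).Finite) :
    D.Finite := by
  choose f hf using hns
  have hinj : Set.InjOn f D := fun a _ b _ hab => by rw [← hf a, ← hf b, hab]
  have himg : f '' D ⊆ G.eps D := by
    rintro _ ⟨v, hv, rfl⟩; simpa [eps, hf v] using hv
  exact Set.Finite.of_finite_image (h.subset himg) hinj

lemma mie_inter_eq {X Y : Set V} (hX : G.IsMinimalInfiniteEmitter X)
    (hY : G.IsMinimalInfiniteEmitter Y) (h : (G.eps (X ∩ Y)).Infinite) : X = Y := by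
  have hne : (X ∩ Y).Nonempty := by
    obtain ⟨e, he⟩ := h.nonempty
    exact ⟨G.s e, he⟩
  have hg : G.G0 (X ∩ Y) := G0.inter hX.1 hY.1 hne
  have h1 : X ∩ Y = X := hX.2.2 _ hg Set.inter_subset_left h
  have h2 : X ∩ Y = Y := hY.2.2 _ hg Set.inter_subset_right h
  rw [← h1, h2]

lemma mie_singleton {v : V} (h : ¬ (G.eps {v}).Finite) :
    G.IsMinimalInfiniteEmitter ({v} : Set V) := by
  refine ⟨G0.vertex v, h, fun B hB hsub hinf => ?_⟩
  rcases Set.subset_singleton_iff_eq.mp hsub with hB' | hB'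
  · exfalso
    apply hinf
    rw [hB']
    simp [eps]
  · exact hB' 

/-- Existence of a (not necessarily disjoint) decomposition. -/
lemma exists_decomp (hrfum : G.RFUM) {A : Set V} (hA : G.G0 A) :
    ∃ (C : Set V) (S : Set (Set V)),
      S.Finite ∧ (∀ B ∈ S, G.IsMinimalInfiniteEmitter B) ∧
      (G.eps C).Finite ∧ A = C ∪ ⋃₀ S := by
  induction hA with
  | empty => exact ⟨∅, ∅, Set.finite_empty, by simp, by simp [eps], by simp⟩
  | vertex v =>
    by_cases h : (G.eps {v}).Finite
    · exact ⟨{v}, ∅, Set.finite_empty, by simp, h, by simp⟩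
    · refine ⟨∅, {{v}}, Set.finite_singleton _, ?_, by simp [eps], by simp⟩
      rintro B rfl
      exact G.mie_singleton h
  | range e =>
    obtain ⟨n, Ai, heq, hAi⟩ := hrfum e
    -- decompose each piece
    have hpiece : ∀ i : Fin n, ∃ (C : Set V) (S : Set (Set V)),
        S.Finite ∧ (∀ B ∈ S, G.IsMinimalInfiniteEmitter B) ∧
        (G.eps C).Finite ∧ Ai i = C ∪ ⋃₀ S := by
      intro i
      rcases hAi i with hm | ⟨v, hv⟩
      · exact ⟨∅, {Ai i}, Set.finite_singleton _, by rintro B rfl; exact hm,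
          by simp [eps], by simp⟩
      · rw [hv]
        by_cases h : (G.eps {v}).Finite
        · exact ⟨{v}, ∅, Set.finite_empty, by simp, h, by simp⟩
        · refine ⟨∅, {{v}}, Set.finite_singleton _, ?_, by simp [eps], by simp⟩
          rintro B rfl
          exact G.mie_singleton h
    choose C S hSfin hSm hC hEq using hpiece
    refine ⟨⋃ i, C i, ⋃ i, S i, Set.finite_iUnion hSfin, ?_, ?_, ?_⟩
    · intro B hB
      obtain ⟨i, hi⟩ := Set.mem_iUnion.mp hB
      exact hSm i B hi
    · have : G.eps (⋃ i, C i) = ⋃ i, G.eps (C i) := by ext x; simp [eps]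
      rw [this]
      exact Set.finite_iUnion hC
    · rw [heq]
      ext x
      simp only [Set.mem_iUnion, Set.mem_union, Set.mem_sUnion]
      constructor
      · rintro ⟨i, hi⟩
        rw [hEq i] at hi
        rcases hi with h | ⟨t, ht, hx⟩
        · exact Or.inl ⟨i, h⟩
        · exact Or.inr ⟨t, ⟨i, ht⟩, hx⟩
      · rintro (⟨i, hi⟩ | ⟨t, ⟨i, ht⟩, hx⟩)
        · exact ⟨i, (hEq i).symm ▸ Or.inl hi⟩
        · exact ⟨i, (hEq i).symm ▸ Or.inr ⟨t, ht, hx⟩⟩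
  | union hA hB ihA ihB =>
    obtain ⟨C₁, S₁, hS₁f, hS₁m, hC₁, hEq₁⟩ := ihA
    obtain ⟨C₂, S₂, hS₂f, hS₂m, hC₂, hEq₂⟩ := ihB
    refine ⟨C₁ ∪ C₂, S₁ ∪ S₂, hS₁f.union hS₂f, ?_, ?_, ?_⟩
    · rintro B (h | h)
      exacts [hS₁m B h, hS₂m B h]
    · have : G.eps (C₁ ∪ C₂) = G.eps C₁ ∪ G.eps C₂ := by ext x; simp [eps]
      rw [this]; exact hC₁.union hC₂
    · rw [hEq₁, hEq₂, Set.sUnion_union]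
      ext x; simp only [Set.mem_union]; tauto
  | inter hA hB hne ihA ihB =>
    rename_i A B
    obtain ⟨C₁, S₁, hS₁f, hS₁m, hC₁, hEq₁⟩ := ihA
    obtain ⟨C₂, S₂, hS₂f, hS₂m, hC₂, hEq₂⟩ := ihB
    set S : Set (Set V) := S₁ ∩ S₂ with hS
    set Cc : Set V := (A ∩ B) \ ⋃₀ S with hCc
    have hsub : ⋃₀ S ⊆ A ∩ B := by
      rintro x ⟨t, ⟨ht₁, ht₂⟩, hx⟩
      constructor
      · rw [hEq₁]; exact Or.inr ⟨t, ht₁, hx⟩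
      · rw [hEq₂]; exact Or.inr ⟨t, ht₂, hx⟩
    refine ⟨Cc, S, hS₁f.inter_of_left _, fun X hX => hS₁m X hX.1, ?_, ?_⟩
    · -- eps Cc is finite
      set P : Set (Set V) :=
        (fun p : Set V × Set V => p.1 ∩ p.2) '' ((S₁ ×ˢ S₂) \ {p | p.1 = p.2}) with hP
      have hPfin : P.Finite := (((hS₁f.prod hS₂f).diff).image _)
      have hPeps : ∀ Z ∈ P, (G.eps Z).Finite := by
        rintro _ ⟨⟨X, Y⟩, ⟨⟨hX, hY⟩, hne'⟩, rfl⟩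
        by_contra hinf
        exact hne' (G.mie_inter_eq (hS₁m X hX) (hS₂m Y hY) hinf)
      have hcov : Cc ⊆ (C₁ ∩ B) ∪ ((A ∩ C₂) ∪ ⋃₀ P) := by
        rintro v ⟨⟨hvA, hvB⟩, hvnS⟩
        have h1 : v ∈ C₁ ∪ ⋃₀ S₁ := hEq₁ ▸ hvA
        have h2 : v ∈ C₂ ∪ ⋃₀ S₂ := hEq₂ ▸ hvB
        rcases h1 with h1 | ⟨X, hX, hvX⟩
        · exact Or.inl ⟨h1, hvB⟩
        rcases h2 with h2 | ⟨Y, hY, hvY⟩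
        · exact Or.inr (Or.inl ⟨hvA, h2⟩)
        by_cases hXY : X = Y
        · exact absurd ⟨X, ⟨hX, hXY ▸ hY⟩, hvX⟩ hvnS
        · exact Or.inr (Or.inr ⟨X ∩ Y, ⟨⟨X, Y⟩, ⟨⟨hX, hY⟩, hXY⟩, rfl⟩, hvX, hvY⟩)
      have hUfin : (G.eps ((C₁ ∩ B) ∪ ((A ∩ C₂) ∪ ⋃₀ P))).Finite := by
        have : G.eps ((C₁ ∩ B) ∪ ((A ∩ C₂) ∪ ⋃₀ P)) =
            G.eps (C₁ ∩ B) ∪ (G.eps (A ∩ C₂) ∪ G.eps (⋃₀ P)) := by ext x; simp [eps]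
        rw [this]
        refine (hC₁.subset (G.eps_mono Set.inter_subset_left)).union
          ((hC₂.subset (G.eps_mono Set.inter_subset_right)).union ?_)
        rw [G.eps_sUnion]
        exact hPfin.biUnion hPeps
      exact hUfin.subset (G.eps_mono hcov)
    · rw [hCc, Set.diff_union_of_subset hsub]

/-- Any minimal infinite emitter contained in a decomposed set belongs to the family. -/
lemma mie_mem {A D : Set V} {T : Set (Set V)} (hT : T.Finite)
    (hTm : ∀ X ∈ T, G.IsMinimalInfiniteEmitter X) (hD : (G.eps D).Finite)
    (hAeq : A = D ∪ ⋃₀ T) {B : Set V} (hB : G.IsMinimalInfiniteEmitter B)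
    (hBA : B ⊆ A) : B ∈ T := by
  have h1 : ¬ ∀ X ∈ T, (G.eps (B ∩ X)).Finite := by
    intro hall
    have hsub : G.eps B ⊆ G.eps (B ∩ D) ∪ ⋃ X ∈ T, G.eps (B ∩ X) := by
      intro e he
      have hBmem : G.s e ∈ B := he
      have hmem : G.s e ∈ D ∪ ⋃₀ T := by
        rw [← hAeq]; exact hBA hBmem
      rcases hmem with h | ⟨X, hX, hx⟩
      · exact Or.inl ⟨hBmem, h⟩
      · exact Or.inr (Set.mem_biUnion hX ⟨hBmem, hx⟩)
    have hfin : (G.eps (B ∩ D) ∪ ⋃ X ∈ T, G.eps (B ∩ X)).Finite :=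
      (hD.subset (G.eps_mono Set.inter_subset_right)).union (hT.biUnion hall)
    exact hB.2.1 (hfin.subset hsub)
  push_neg at h1
  obtain ⟨X, hXT, hXinf⟩ := h1
  have hXinf' : (G.eps (B ∩ X)).Infinite := hXinf
  have hne : (B ∩ X).Nonempty := by
    obtain ⟨e, he⟩ := hXinf'.nonempty
    exact ⟨G.s e, he⟩
  have hg : G.G0 (B ∩ X) := G0.inter hB.1 (hTm X hXT).1 hne
  have e1 : B ∩ X = B := hB.2.2 _ hg Set.inter_subset_left hXinf'
  have e2 : B ∩ X = X := (hTm X hXT).2.2 _ hg Set.inter_subset_right hXinf'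
  rw [← e1, e2]
  exact hXT

end Ultragraph

/-- for an ultragraph with no sinks satisfying Condition (RFUM), every
`A ∈ G⁰` can be written uniquely as a union `A = C ∪ ⋃₀ S` where `C` (the part "`A_k`")
is finite with finitely many outgoing edges, `S` is a finite collection of minimal
infinite emitters (the parts "`A_j`, `j ≠ k`"), and every member of `S` is disjoint
from `C`. -/
theorem stmt2 {V E : Type*} [Countable V] [Countable E] (G : Ultragraph V E)
    (hns : G.NoSinks) (hrfum : G.RFUM) (A : Set V) (hA : G.G0 A) :
    ∃! p : Set V × Set (Set V),
      p.2.Finite ∧ (∀ B ∈ p.2, G.IsMinimalInfiniteEmitter B) ∧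
      p.1.Finite ∧ (G.eps p.1).Finite ∧
      (∀ B ∈ p.2, B ∩ p.1 = ∅) ∧
      A = p.1 ∪ ⋃₀ p.2 := by
  obtain ⟨C, S, hSfin, hSm, hepsC, hAeq⟩ := G.exists_decomp hrfum hA
  set C' : Set V := C \ ⋃₀ S with hC'
  have hepsC' : (G.eps C').Finite := hepsC.subset (G.eps_mono Set.diff_subset)
  have hC'fin : C'.Finite := G.finite_of_eps_finite hns hepsC'
  have hdisj : ∀ B ∈ S, B ∩ C' = ∅ := by
    intro B hB
    ext x
    simp only [Set.mem_inter_iff, Set.mem_empty_iff_false, iff_false, not_and]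
    rintro hxB ⟨-, hxn⟩
    exact hxn ⟨B, hB, hxB⟩
  have hAeq' : A = C' ∪ ⋃₀ S := by
    rw [hC', Set.diff_union_self, ← hAeq]
  refine ⟨(C', S), ⟨hSfin, hSm, hC'fin, hepsC', hdisj, hAeq'⟩, ?_⟩
  rintro ⟨D, T⟩ ⟨hTfin, hTm, hDfin, hepsD, hTdisj, hTeq⟩
  have hTS : T = S := by
    ext X
    constructor
    · intro hX
      refine G.mie_mem hSfin hSm hepsC' hAeq' (hTm X hX) ?_
      intro x hx
      rw [hTeq]
      exact Or.inr ⟨X, hX, hx⟩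
    · intro hX
      refine G.mie_mem hTfin hTm hepsD hTeq (hSm X hX) ?_
      intro x hx
      rw [hAeq']
      exact Or.inr ⟨X, hX, hx⟩
  have hDC : D = C' := by
    have key : ∀ (D₀ : Set V), (∀ B ∈ S, B ∩ D₀ = ∅) → A = D₀ ∪ ⋃₀ S → D₀ = A \ ⋃₀ S := by
      intro D₀ hd heq
      ext x
      constructor
      · intro hx
        refine ⟨heq ▸ Or.inl hx, ?_⟩
        rintro ⟨B, hB, hxB⟩
        have : x ∈ B ∩ D₀ := ⟨hxB, hx⟩
        rw [hd B hB] at this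
        exact this
      · rintro ⟨hxA, hxn⟩
        rcases heq ▸ hxA with h | h
        · exact h
        · exact absurd h hxn
    rw [key D (hTS ▸ hTdisj) (hTS ▸ hTeq), key C' hdisj hAeq']
  rw [Prod.mk.injEq]
  exact ⟨hDC, hTS⟩
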